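/- arXiv:2101.11106 — 5 statements merged into one kernel-verified Lean document; each statement's English description precedes it below -/
import Mathlib

section
/- Let X be a compact Hausdorff topological space. Every ℝ-algebra homomorphism φ : C(X,ℝ) → ℝ is evaluation at a unique point: there exists a unique x ∈ X such that φ(f) = f(x) for all f ∈ C(X,ℝ). -/
/-- For a compact Hausdorff space `X`, every `ℝ`-algebra homomorphism `C(X,ℝ) → ℝ`
is evaluation at a unique point of `X`. -/
theorem stmt1 (X : Type*) [TopologicalSpace X] [CompactSpace X] [T2Space X]
    (φ : C(X, ℝ) →ₐ[ℝ] ℝ) :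
    ∃! x : X, ∀ f : C(X, ℝ), φ f = f x := by
  obtain ⟨x, hx⟩ := (WeakDual.CharacterSpace.continuousMapEval_bijective X ℝ).2
    (WeakDual.CharacterSpace.equivAlgHom.symm φ)
  have key : ∀ f : C(X, ℝ), φ f = f x := by
    intro f
    have h1 := congrArg (fun ψ : WeakDual.characterSpace ℝ C(X, ℝ) => ψ f) hx
    simpa [WeakDual.CharacterSpace.continuousMapEval_apply_apply] using h1.symm
  refine ⟨x, key, fun y hy => ?_⟩
  have : WeakDual.CharacterSpace.continuousMapEval X ℝ y
      = WeakDual.CharacterSpace.continuousMapEval X ℝ x := by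
    ext f
    simp only [WeakDual.CharacterSpace.continuousMapEval_apply_apply]
    rw [← key f, hy f]
  exact (WeakDual.CharacterSpace.continuousMapEval_bijective X ℝ).1 this
end

section
/- A topological space X is pseudocompact if and only if X contains no C-embedded copy of ℕ; that is, every continuous real-valued function on X is bounded if and only if there is no injective topological embedding e : ℕ → X (ℕ carrying the discrete topology) whose image D = e(ℕ) is C-embedded in X. -/
open Topology

/-- A topological space `X` is pseudocompact (every continuous real-valued function on `X`
is bounded) if and only if `X` contains no C-embedded copy of `ℕ` (the image of an
injective topological embedding of the discrete space `ℕ`, on which every real-valued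
function extends continuously to `X`). -/
theorem stmt11 (X : Type*) [TopologicalSpace X] :
    (∀ f : X → ℝ, Continuous f → Bornology.IsBounded (Set.range f)) ↔
    ¬ ∃ e : ℕ → X, Topology.IsEmbedding e ∧
        ∀ f : Set.range e → ℝ, Continuous f →
          ∃ F : X → ℝ, Continuous F ∧ ∀ d : Set.range e, F (d : X) = f d := by
  constructor
  · rintro hps ⟨e, he, hC⟩
    have hd : DiscreteTopology (Set.range e) :=
      (Topology.IsEmbedding.toHomeomorph he).symm.isEmbedding.discreteTopology
    obtain ⟨F, hF, hFe⟩ := hC (fun d => ((Function.invFun e (d : X) : ℕ) : ℝ))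
      continuous_of_discreteTopology
    obtain ⟨C, hc⟩ := isBounded_iff_forall_norm_le.mp (hps F hF)
    obtain ⟨n, hn⟩ := exists_nat_gt C
    have h1 : F (e n) = n := by
      have h2 := hFe ⟨e n, ⟨n, rfl⟩⟩
      simpa [Function.leftInverse_invFun he.injective n] using h2
    have h3 := hc (F (e n)) ⟨e n, rfl⟩
    rw [h1] at h3
    have : (n : ℝ) ≤ C := le_trans (le_abs_self _) h3
    linarith
  · intro hno f hf
    by_contra hb
    have hub : ∀ C : ℝ, ∃ y : X, C < |f y| := by
      intro C
      by_contra h; push_neg at h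
      exact hb (isBounded_iff_forall_norm_le.mpr
        ⟨C, by rintro _ ⟨y, rfl⟩; simpa using h y⟩)
    choose g hg using hub
    set x : ℕ → X := fun n => Nat.rec (g 0) (fun _ p => g (|f p| + 1)) n with hx
    have hstep : ∀ n, |f (x n)| + 1 < |f (x (n + 1))| := fun n => hg _
    have hmono : ∀ m n, m < n → |f (x m)| + 1 < |f (x n)| := by
      intro m n hmn
      induction n with
      | zero => omega
      | succ k ih =>
        rcases Nat.lt_succ_iff_lt_or_eq.mp hmn with h | h
        · have := hstep k
          have := ih h
          linarith
        · subst h; exact hstep m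
    have key : ∀ m n, m < n → (1 : ℝ) ≤ dist (f (x m)) (f (x n)) := by
      intro m n h
      have h1 := hmono m n h
      have h2 := abs_sub_abs_le_abs_sub (f (x n)) (f (x m))
      rw [Real.dist_eq, abs_sub_comm]
      linarith
    have hpair : Pairwise fun m n => (1 : ℝ) ≤ dist ((f ∘ x) m) ((f ∘ x) n) := by
      intro m n hmn
      rcases hmn.lt_or_gt with h | h
      · exact key m n h
      · rw [dist_comm]; exact key n m h
    have hce : Topology.IsClosedEmbedding (f ∘ x) :=
      Metric.isClosedEmbedding_of_pairwise_le_dist one_pos hpair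
    have hxe : Topology.IsEmbedding x :=
      Topology.IsEmbedding.of_comp continuous_of_discreteTopology hf hce.isEmbedding
    apply hno
    refine ⟨x, hxe, ?_⟩
    intro g _
    have hdisc : DiscreteTopology (Set.range (f ∘ x)) :=
      (Topology.IsEmbedding.toHomeomorph hce.isEmbedding).symm.isEmbedding.discreteTopology
    have hinj : Function.Injective (f ∘ x) := hce.injective
    let g' : Set.range (f ∘ x) → ℝ := fun y => g ⟨x y.2.choose, ⟨y.2.choose, rfl⟩⟩
    obtain ⟨G, hG⟩ := ContinuousMap.exists_restrict_eq hce.isClosed_range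
      ⟨g', continuous_of_discreteTopology⟩
    refine ⟨G ∘ f, G.continuous.comp hf, ?_⟩
    rintro ⟨_, m, rfl⟩
    have hmem : f (x m) ∈ Set.range (f ∘ x) := ⟨m, rfl⟩
    have h1 : G (f (x m)) = g' ⟨f (x m), hmem⟩ :=
      ContinuousMap.congr_fun hG ⟨f (x m), hmem⟩
    have hk : (f ∘ x) hmem.choose = f (x m) := hmem.choose_spec
    have hkm : hmem.choose = m := hinj hk
    show G (f (x m)) = _
    rw [h1]
    simp only [g', hkm]
end

section
/- Let X be a topological space, E ⊆ X a subset, and τ : X → ℝ a continuous function that is unbounded on E (i.e. {|τ(x)| : x ∈ E} is unbounded). Then there exists an injective topological embedding e : ℕ → X with e(n) ∈ E for all n, whose image is C-embedded in X, and such that |τ(e(n))| → ∞ as n → ∞. -/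
open Filter Topology

/-- Piecewise-linear interpolation through a strictly increasing sequence tending to infinity. -/
lemma interp_exists (t : ℕ → ℝ) (hmono : StrictMono t)
    (htop : Tendsto t atTop atTop) (v : ℕ → ℝ) :
    ∃ g : ℝ → ℝ, Continuous g ∧ ∀ n, g (t n) = v n := by
  set h : ℕ → ℝ → ℝ := fun n s => min 1 (max 0 ((s - t n) / (t (n + 1) - t n))) with hh
  have hcont : ∀ n, Continuous (h n) := by
    intro n
    apply Continuous.min continuous_const
    apply Continuous.max continuous_const
    exact (continuous_id.sub continuous_const).div_const _
  have hzero : ∀ n s, s ≤ t n → h n s = 0 := by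
    intro n s hs
    have hd : 0 < t (n + 1) - t n := sub_pos.2 (hmono (Nat.lt_succ_self n))
    have : (s - t n) / (t (n + 1) - t n) ≤ 0 :=
      div_nonpos_of_nonpos_of_nonneg (sub_nonpos.2 hs) hd.le
    simp [hh, max_eq_left this, min_eq_right (zero_le_one (α := ℝ))]
  have hone : ∀ n s, t (n + 1) ≤ s → h n s = 1 := by
    intro n s hs
    have hd : 0 < t (n + 1) - t n := sub_pos.2 (hmono (Nat.lt_succ_self n))
    have : (1 : ℝ) ≤ (s - t n) / (t (n + 1) - t n) := by
      rw [le_div_iff₀ hd]; linarith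
    have h0 : max 0 ((s - t n) / (t (n + 1) - t n)) = (s - t n) / (t (n + 1) - t n) :=
      max_eq_right (le_trans zero_le_one this)
    simp [hh, h0, min_eq_left this]
  set g : ℝ → ℝ := fun s => v 0 + ∑' n, (v (n + 1) - v n) * h n s with hg
  set G : ℕ → ℝ → ℝ := fun N s => v 0 + ∑ n ∈ Finset.range N, (v (n + 1) - v n) * h n s with hG
  have hGcont : ∀ N, Continuous (G N) := by
    intro N
    exact continuous_const.add (continuous_finset_sum _ fun n _ => (continuous_const.mul (hcont n)))
  have hloc : ∀ N s, s < t N → g s = G N s := by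
    intro N s hs
    have : ∀ n ∉ Finset.range N, (v (n + 1) - v n) * h n s = 0 := by
      intro n hn
      rw [Finset.mem_range, not_lt] at hn
      rw [hzero n s (le_trans hs.le (hmono.monotone hn)), mul_zero]
    rw [hg, hG]
    exact congrArg (v 0 + ·) (tsum_eq_sum this)
  have hgc : Continuous g := by
    rw [continuous_iff_continuousAt]
    intro s
    obtain ⟨N, hN⟩ : ∃ N, s < t N := by
      rcases (htop.eventually (eventually_gt_atTop s)).exists with ⟨N, hN⟩
      exact ⟨N, hN⟩
    have hmem : Set.Iio (t N) ∈ 𝓝 s := Iio_mem_nhds hN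
    have heq : g =ᶠ[𝓝 s] G N :=
      Filter.eventually_of_mem hmem fun x hx => hloc N x hx
    exact (hGcont N).continuousAt.congr heq.symm
  refine ⟨g, hgc, fun m => ?_⟩
  have hval : g (t m) = G (m + 1) (t m) := hloc (m + 1) (t m) (hmono (Nat.lt_succ_self m))
  rw [hval]
  simp only [hG]
  have : ∀ n ∈ Finset.range (m + 1), (v (n + 1) - v n) * h n (t m)
      = if n < m then v (n + 1) - v n else 0 := by
    intro n hn
    rw [Finset.mem_range, Nat.lt_succ_iff] at hn
    by_cases hnm : n < m
    · rw [hone n (t m) (hmono.monotone hnm), mul_one, if_pos hnm]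
    · have : n = m := le_antisymm hn (not_lt.1 hnm)
      subst this
      rw [hzero n (t n) le_rfl, mul_zero, if_neg hnm]
  rw [Finset.sum_congr rfl this, Finset.sum_range_succ, if_neg (lt_irrefl m), add_zero]
  have : ∑ n ∈ Finset.range m, (if n < m then v (n + 1) - v n else 0)
      = ∑ n ∈ Finset.range m, (v (n + 1) - v n) :=
    Finset.sum_congr rfl fun n hn => if_pos (Finset.mem_range.1 hn)
  rw [this, Finset.sum_range_sub]; ring

/-- If `τ : X → ℝ` is continuous and unbounded on `E ⊆ X`, then there is an injective
topological embedding `e : ℕ → X` with values in `E`, whose image is C-embedded in `X`,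
and with `|τ (e n)| → ∞`. -/
theorem stmt12 (X : Type*) [TopologicalSpace X] (E : Set X) (τ : X → ℝ)
    (hτ : Continuous τ) (hub : ¬ BddAbove ((fun x => |τ x|) '' E)) :
    ∃ e : ℕ → X, Topology.IsEmbedding e ∧ (∀ n : ℕ, e n ∈ E) ∧
      (∀ f : Set.range e → ℝ, Continuous f →
        ∃ F : X → ℝ, Continuous F ∧ ∀ d : Set.range e, F (d : X) = f d) ∧
      Filter.Tendsto (fun n : ℕ => |τ (e n)|) Filter.atTop Filter.atTop := by
  have key : ∀ B : ℝ, ∃ x, x ∈ E ∧ B < |τ x| := by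
    intro B
    rcases not_bddAbove_iff.1 hub B with ⟨y, ⟨x, hxE, hxy⟩, hBy⟩
    exact ⟨x, hxE, by simpa [hxy] using hBy⟩
  choose p hpE hpB using key
  set e : ℕ → X := fun n => Nat.rec (p 0) (fun _ prev => p (|τ prev| + 1)) n with he
  set t : ℕ → ℝ := fun n => |τ (e n)| with ht
  have heE : ∀ n, e n ∈ E := by
    intro n
    cases n with
    | zero => exact hpE 0
    | succ k => exact hpE _
  have hstep : ∀ n, t n + 1 < t (n + 1) := fun n => hpB (|τ (e n)| + 1)
  have hmono : StrictMono t := strictMono_nat_of_lt_succ fun n => by linarith [hstep n]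
  have hgrow : ∀ n : ℕ, t 0 + n ≤ t n := by
    intro n
    induction n with
    | zero => simp
    | succ k ih => push_cast; push_cast at ih; linarith [hstep k]
  have htop : Tendsto t atTop atTop := by
    apply tendsto_atTop_mono hgrow
    exact tendsto_atTop_add_const_left _ _ tendsto_natCast_atTop_atTop
  have hsep : Pairwise fun m n => (1 : ℝ) ≤ dist (t m) (t n) := by
    have aux : ∀ m n : ℕ, m < n → t m + 1 ≤ t n := by
      intro m n hmn
      calc t m + 1 ≤ t (m + 1) := (hstep m).le
        _ ≤ t n := hmono.monotone hmn
    intro m n hmn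
    rcases hmn.lt_or_gt with h | h
    · rw [Real.dist_eq, abs_sub_comm, abs_of_nonneg (by linarith [aux m n h])]
      linarith [aux m n h]
    · rw [Real.dist_eq, abs_of_nonneg (by linarith [aux n m h])]
      linarith [aux n m h]
  have htemb : Topology.IsEmbedding t :=
    (Metric.isClosedEmbedding_of_pairwise_le_dist zero_lt_one hsep).toIsEmbedding
  have hemb : Topology.IsEmbedding e := by
    apply Topology.IsEmbedding.of_comp continuous_of_discreteTopology hτ.abs
    exact htemb
  refine ⟨e, hemb, heE, ?_, htop⟩
  intro f _
  set v : ℕ → ℝ := fun n => f ⟨e n, Set.mem_range_self n⟩ with hv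
  obtain ⟨g, hgc, hgv⟩ := interp_exists t hmono htop v
  refine ⟨fun x => g (|τ x|), hgc.comp hτ.abs, ?_⟩
  rintro ⟨_, n, rfl⟩
  exact hgv n
end

section
/- Let X be a measurable space, φ : X → X a measurable map, and μ a φ-invariant probability measure on X (φ_*μ = μ). Then φ is ergodic with respect to μ if and only if μ is an extreme point of the set of φ-invariant probability measures: that is, if and only if for all φ-invariant probability measures μ₁, μ₂ and every real a with 0 < a < 1, the equality μ = a·μ₁ + (1−a)·μ₂ implies μ₁ = μ₂ = μ. -/
open MeasureTheory Set
open scoped ENNReal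

section Aux

variable {X : Type*} [MeasurableSpace X] {μ : Measure X} {A B : Set X}

/-- If `A`, `B` have equal finite `μ`-measure and equal finite `f`-integrals, with `f < 1` on `A`
and `1 ≤ f` on `B`, then `μ A = 0`. -/
lemma aux_null_lt {f : X → ℝ≥0∞} (hA : MeasurableSet A) (hB : MeasurableSet B)
    (hμ : μ A = μ B)
    (hint : ∫⁻ x in A, f x ∂μ = ∫⁻ x in B, f x ∂μ) (hintfin : ∫⁻ x in A, f x ∂μ ≠ ∞)
    (h1 : ∀ x ∈ A, f x < 1) (h2 : ∀ x ∈ B, 1 ≤ f x) : μ A = 0 := by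
  by_contra h0
  have hBA : μ A ≤ ∫⁻ x in A, f x ∂μ := by
    calc μ A = μ B := hμ
    _ = ∫⁻ _ in B, 1 ∂μ := by simp
    _ ≤ ∫⁻ x in B, f x ∂μ := setLIntegral_mono' hB h2
    _ = ∫⁻ x in A, f x ∂μ := hint.symm
  have hlt : ∫⁻ x in A, f x ∂μ < ∫⁻ x in A, (1 : ℝ≥0∞) ∂μ := by
    refine lintegral_strict_mono ?_ aemeasurable_const hintfin ?_
    · simpa [Measure.restrict_eq_zero] using h0
    · exact (ae_restrict_iff' hA).2 (Filter.Eventually.of_forall h1)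
  simp only [lintegral_const, one_mul, Measure.restrict_apply_univ] at hlt
  exact absurd (hBA.trans_lt hlt) (lt_irrefl _)

/-- Variant: `f ≤ 1` on `A` and `1 < f` on `B`. -/
lemma aux_null_gt {f : X → ℝ≥0∞} (hA : MeasurableSet A) (hB : MeasurableSet B)
    (hμ : μ A = μ B) (hμfin : μ A ≠ ∞) (hfm : Measurable f)
    (hint : ∫⁻ x in A, f x ∂μ = ∫⁻ x in B, f x ∂μ)
    (h1 : ∀ x ∈ A, f x ≤ 1) (h2 : ∀ x ∈ B, 1 < f x) : μ A = 0 := by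
  by_contra h0
  have hAB : ∫⁻ x in A, f x ∂μ ≤ μ B := by
    calc ∫⁻ x in A, f x ∂μ ≤ ∫⁻ _ in A, 1 ∂μ := setLIntegral_mono' hA h1
    _ = μ A := by simp
    _ = μ B := hμ
  have hlt : ∫⁻ _ in B, (1 : ℝ≥0∞) ∂μ < ∫⁻ x in B, f x ∂μ := by
    refine lintegral_strict_mono ?_ hfm.aemeasurable ?_ ?_
    · simp only [Ne, Measure.restrict_eq_zero]
      rw [← hμ]; exact h0
    · simpa using (hμ ▸ hμfin : μ B ≠ ∞)
    · exact (ae_restrict_iff' hB).2 (Filter.Eventually.of_forall h2)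
  simp only [lintegral_const, one_mul, Measure.restrict_apply_univ] at hlt
  exact absurd hint (hAB.trans_lt hlt).ne

end Aux

section Key

variable {X : Type*} [MeasurableSpace X] {φ : X → X}

lemma cancel_diff (m : Measure X) [IsFiniteMeasure m] {C T : Set X}
    (hC : MeasurableSet C) (hT : MeasurableSet T) (h : m C = m T) :
    m (C \ T) = m (T \ C) := by
  have h1 := measure_diff_add_inter (μ := m) C hT
  have h2 := measure_diff_add_inter (μ := m) T hC
  rw [inter_comm] at h2
  exact WithTop.add_right_cancel (measure_ne_top m _) (h1.trans (h.trans h2.symm))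

/-- In an ergodic system, any invariant probability measure absolutely continuous w.r.t. `μ`
equals `μ`. -/
lemma ac_inv_eq (hφ : Measurable φ) (μ ν : Measure X)
    [IsProbabilityMeasure μ] [IsProbabilityMeasure ν]
    (hinv : μ.map φ = μ) (hνinv : ν.map φ = ν)
    (herg : ∀ B : Set X, MeasurableSet B → φ ⁻¹' B = B → μ B = 0 ∨ μ B = 1)
    (hac : ν ≪ μ) : ν = μ := by
  have hergE : Ergodic φ μ := by
    refine ⟨⟨hφ, hinv⟩, ⟨fun s hs hs' => Filter.eventuallyConst_set'.2 ?_⟩⟩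
    rcases herg s hs hs' with h | h
    · exact Or.inl (ae_eq_empty.2 h)
    · exact Or.inr (ae_eq_univ.2 ((prob_compl_eq_zero_iff hs).2 h))
  set f := ν.rnDeriv μ with hfdef
  have hf : Measurable f := Measure.measurable_rnDeriv ν μ
  have hνd : μ.withDensity f = ν := Measure.withDensity_rnDeriv_eq ν μ hac
  -- measures of preimages
  have hμpre : ∀ {S : Set X}, MeasurableSet S → μ (φ ⁻¹' S) = μ S := fun {S} hS => by
    conv_rhs => rw [← hinv]
    exact (Measure.map_apply hφ hS).symm
  have hνpre : ∀ {S : Set X}, MeasurableSet S → ν (φ ⁻¹' S) = ν S := fun {S} hS => by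
    conv_rhs => rw [← hνinv]
    exact (Measure.map_apply hφ hS).symm
  have hνint : ∀ {S : Set X}, MeasurableSet S → ν S = ∫⁻ x in S, f x ∂μ := fun {S} hS => by
    rw [← hνd, withDensity_apply f hS]
  -- ae invariance and 0-1 law for a measurable set whose diffs with preimage are null
  have hae01 : ∀ {S : Set X}, MeasurableSet S → μ (S \ φ ⁻¹' S) = 0 → μ (φ ⁻¹' S \ S) = 0 →
      μ S = 0 ∨ μ S = 1 := by
    intro S hS h1 h2
    have hinvae : φ ⁻¹' S =ᵐ[μ] S := by
      rw [← measure_symmDiff_eq_zero_iff]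
      exact measure_union_null h2 h1
    rcases hergE.quasiErgodic.ae_empty_or_univ₀ hS.nullMeasurableSet hinvae with h | h
    · exact Or.inl (ae_eq_empty.1 h)
    · exact Or.inr ((prob_compl_eq_zero_iff hS).1 (ae_eq_univ.1 h))
  -- the set where f < 1 is null
  have hC : μ {x | f x < 1} = 0 := by
    set C : Set X := {x | f x < 1} with hCdef
    have hCm : MeasurableSet C := measurableSet_lt hf measurable_const
    have hTm : MeasurableSet (φ ⁻¹' C) := hφ hCm
    have hμd : μ (C \ φ ⁻¹' C) = μ (φ ⁻¹' C \ C) :=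
      cancel_diff μ hCm hTm (hμpre hCm).symm
    have hνdiff : ν (C \ φ ⁻¹' C) = ν (φ ⁻¹' C \ C) :=
      cancel_diff ν hCm hTm (hνpre hCm).symm
    have hAnull : μ (C \ φ ⁻¹' C) = 0 := by
      refine aux_null_lt (f := f) (hCm.diff hTm) (hTm.diff hCm) hμd ?_ ?_ ?_ ?_
      · rw [← hνint (hCm.diff hTm), ← hνint (hTm.diff hCm)]; exact hνdiff
      · rw [← hνint (hCm.diff hTm)]; exact measure_ne_top ν _
      · exact fun x hx => hx.1
      · exact fun x hx => not_lt.1 hx.2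
    have hBnull : μ (φ ⁻¹' C \ C) = 0 := hμd ▸ hAnull
    rcases hae01 hCm hAnull hBnull with h | h
    · exact h
    · exfalso
      have hνC : ν C = 1 := by
        have : μ Cᶜ = 0 := (prob_compl_eq_zero_iff hCm).2 h
        have : ν Cᶜ = 0 := hac this
        exact (prob_compl_eq_zero_iff hCm).1 this
      have hlt : ∫⁻ x in C, f x ∂μ < ∫⁻ _ in C, (1 : ℝ≥0∞) ∂μ := by
        refine lintegral_strict_mono ?_ aemeasurable_const ?_ ?_
        · simp only [Ne, Measure.restrict_eq_zero, h]; exact one_ne_zero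
        · rw [← hνint hCm]; exact measure_ne_top ν _
        · exact (ae_restrict_iff' hCm).2 (Filter.Eventually.of_forall fun x hx => hx)
      rw [← hνint hCm, hνC] at hlt
      simp [h] at hlt
  -- the set where 1 < f is null
  have hC' : μ {x | 1 < f x} = 0 := by
    set C : Set X := {x | 1 < f x} with hCdef
    have hCm : MeasurableSet C := measurableSet_lt measurable_const hf
    have hTm : MeasurableSet (φ ⁻¹' C) := hφ hCm
    have hμd : μ (φ ⁻¹' C \ C) = μ (C \ φ ⁻¹' C) :=
      cancel_diff μ hTm hCm (hμpre hCm)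
    have hνdiff : ν (φ ⁻¹' C \ C) = ν (C \ φ ⁻¹' C) :=
      cancel_diff ν hTm hCm (hνpre hCm)
    have hAnull : μ (φ ⁻¹' C \ C) = 0 := by
      refine aux_null_gt (f := f) (hTm.diff hCm) (hCm.diff hTm) hμd (measure_ne_top μ _) hf ?_ ?_ ?_
      · rw [← hνint (hTm.diff hCm), ← hνint (hCm.diff hTm)]; exact hνdiff
      · exact fun x hx => not_lt.1 hx.2
      · exact fun x hx => hx.1
    have hBnull : μ (C \ φ ⁻¹' C) = 0 := hμd ▸ hAnull
    rcases hae01 hCm hBnull hAnull with h | h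
    · exact h
    · exfalso
      have hνC : ν C = 1 := by
        have : μ Cᶜ = 0 := (prob_compl_eq_zero_iff hCm).2 h
        have : ν Cᶜ = 0 := hac this
        exact (prob_compl_eq_zero_iff hCm).1 this
      have hlt : ∫⁻ _ in C, (1 : ℝ≥0∞) ∂μ < ∫⁻ x in C, f x ∂μ := by
        refine lintegral_strict_mono ?_ hf.aemeasurable ?_ ?_
        · simp only [Ne, Measure.restrict_eq_zero, h]; exact one_ne_zero
        · simp [h]
        · exact (ae_restrict_iff' hCm).2 (Filter.Eventually.of_forall fun x hx => hx)
      rw [← hνint hCm, hνC] at hlt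
      simp [h] at hlt
  -- conclude f = 1 a.e.
  have hf1 : f =ᵐ[μ] 1 := by
    have h1 : ∀ᵐ x ∂μ, ¬ f x < 1 := (ae_iff).2 (by simpa using hC)
    have h2 : ∀ᵐ x ∂μ, ¬ 1 < f x := (ae_iff).2 (by simpa using hC')
    filter_upwards [h1, h2] with x hx1 hx2
    exact le_antisymm (not_lt.1 hx2) (not_lt.1 hx1)
  calc ν = μ.withDensity f := hνd.symm
  _ = μ.withDensity 1 := withDensity_congr_ae hf1
  _ = μ := by simp

end Key

/-- A measure-preserving map `φ` of a probability space `(X, μ)` is ergodic (every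
measurable strictly invariant set has measure `0` or `1`) if and only if `μ` is an
extreme point of the set of `φ`-invariant probability measures. -/
theorem stmt16 (X : Type*) [MeasurableSpace X] (φ : X → X) (hφ : Measurable φ)
    (μ : Measure X) [IsProbabilityMeasure μ] (hinv : μ.map φ = μ) :
    (∀ B : Set X, MeasurableSet B → φ ⁻¹' B = B → μ B = 0 ∨ μ B = 1) ↔
    (∀ μ₁ μ₂ : Measure X, IsProbabilityMeasure μ₁ → IsProbabilityMeasure μ₂ →
      μ₁.map φ = μ₁ → μ₂.map φ = μ₂ → ∀ a : ℝ, 0 < a → a < 1 →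
        μ = ENNReal.ofReal a • μ₁ + ENNReal.ofReal (1 - a) • μ₂ →
        μ₁ = μ ∧ μ₂ = μ) := by
  constructor
  · intro herg μ₁ μ₂ p1 p2 hi1 hi2 a ha0 ha1 hdec
    have hoa : ENNReal.ofReal a ≠ 0 := (ENNReal.ofReal_pos.2 ha0).ne'
    have hob : ENNReal.ofReal (1 - a) ≠ 0 := (ENNReal.ofReal_pos.2 (by linarith)).ne'
    have key : ∀ s : Set X, μ s = 0 → μ₁ s = 0 ∧ μ₂ s = 0 := by
      intro s hs
      have h := congrArg (fun m : Measure X => m s) hdec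
      simp only [Measure.coe_add, Pi.add_apply, Measure.smul_apply, smul_eq_mul, hs] at h
      have h' := h.symm
      rw [add_eq_zero] at h'
      exact ⟨by simpa [hoa] using h'.1, by simpa [hob] using h'.2⟩
    have hac1 : μ₁ ≪ μ := fun {s} hs => (key s hs).1
    have hac2 : μ₂ ≪ μ := fun {s} hs => (key s hs).2
    exact ⟨ac_inv_eq hφ μ μ₁ hinv hi1 herg hac1, ac_inv_eq hφ μ μ₂ hinv hi2 herg hac2⟩
  · intro hext B hB hBinv
    by_contra hcon
    push_neg at hcon
    obtain ⟨h0, h1⟩ := hcon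
    have hBcinv : φ ⁻¹' Bᶜ = Bᶜ := by rw [Set.preimage_compl, hBinv]
    have hμBfin : μ B ≠ ∞ := measure_ne_top μ B
    have hμBc0 : μ Bᶜ ≠ 0 := fun h => h1 ((prob_compl_eq_zero_iff hB).1 h)
    have hμBcfin : μ Bᶜ ≠ ∞ := measure_ne_top μ Bᶜ
    set μ₁ : Measure X := (μ B)⁻¹ • μ.restrict B with hμ₁
    set μ₂ : Measure X := (μ Bᶜ)⁻¹ • μ.restrict Bᶜ with hμ₂
    have p1 : IsProbabilityMeasure μ₁ := ⟨by
      simp [hμ₁, Measure.smul_apply, Measure.restrict_apply_univ,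
        ENNReal.inv_mul_cancel h0 hμBfin]⟩
    have p2 : IsProbabilityMeasure μ₂ := ⟨by
      simp [hμ₂, Measure.smul_apply, Measure.restrict_apply_univ,
        ENNReal.inv_mul_cancel hμBc0 hμBcfin]⟩
    have hres : ∀ {S : Set X}, MeasurableSet S → φ ⁻¹' S = S →
        (μ.restrict S).map φ = μ.restrict S := by
      intro S hS hSinv
      ext A hA
      rw [Measure.map_apply hφ hA, Measure.restrict_apply (hφ hA), Measure.restrict_apply hA]
      conv_lhs => rw [← hSinv, ← Set.preimage_inter]
      rw [← Measure.map_apply hφ (hA.inter hS), hinv]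
    have hi1 : μ₁.map φ = μ₁ := by
      rw [hμ₁, Measure.map_smul, hres hB hBinv]
    have hi2 : μ₂.map φ = μ₂ := by
      rw [hμ₂, Measure.map_smul, hres hB.compl hBcinv]
    set a : ℝ := (μ B).toReal with ha
    have ha0 : 0 < a := ENNReal.toReal_pos h0 hμBfin
    have hBlt1 : μ B < 1 := lt_of_le_of_ne prob_le_one h1
    have ha1 : a < 1 := by
      have := (ENNReal.toReal_lt_toReal hμBfin ENNReal.one_ne_top).2 hBlt1
      simpa using this
    have hoa : ENNReal.ofReal a = μ B := ENNReal.ofReal_toReal hμBfin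
    have hob : ENNReal.ofReal (1 - a) = μ Bᶜ := by
      rw [ENNReal.ofReal_sub _ ha0.le, ENNReal.ofReal_one, hoa, prob_compl_eq_one_sub hB]
    have hdec : μ = ENNReal.ofReal a • μ₁ + ENNReal.ofReal (1 - a) • μ₂ := by
      rw [hoa, hob, hμ₁, hμ₂, smul_smul, smul_smul, ENNReal.mul_inv_cancel h0 hμBfin,
        ENNReal.mul_inv_cancel hμBc0 hμBcfin, one_smul, one_smul,
        Measure.restrict_add_restrict_compl hB]
    obtain ⟨e1, _⟩ := hext μ₁ μ₂ p1 p2 hi1 hi2 a ha0 ha1 hdec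
    have : μ₁ B = μ B := by rw [e1]
    rw [hμ₁, Measure.smul_apply, Measure.restrict_apply hB, Set.inter_self, smul_eq_mul,
      ENNReal.inv_mul_cancel h0 hμBfin] at this
    exact h1 this.symm
end

section
/- Let G be a locally compact, second countable Hausdorff topological group and H a closed subgroup of G. Then the quotient space G/H (with the quotient topology and its Borel σ-algebra, on which G acts by left translation) admits a unique invariant measure class: (i) there exists a nonzero σ-finite Borel measure μ on G/H that is quasi-invariant, meaning that for every g ∈ G the translate g_*μ and μ are mutually absolutely continuous; and (ii) any two nonzero σ-finite quasi-invariant Borel measures on G/H are mutually absolutely continuous (have the same null sets). -/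
open MeasureTheory
open scoped ENNReal

/-- For a locally compact second countable Hausdorff group `G` and a closed subgroup `H`,
the quotient `G/H` admits a unique invariant measure class: there is a nonzero σ-finite
quasi-invariant Borel measure, and any two nonzero σ-finite quasi-invariant Borel
measures on `G/H` are mutually absolutely continuous. -/
theorem stmt17 (G : Type*) [Group G] [TopologicalSpace G] [IsTopologicalGroup G]
    [LocallyCompactSpace G] [SecondCountableTopology G] [T2Space G]
    (H : Subgroup G) (hH : IsClosed (H : Set G))
    [MeasurableSpace (G ⧸ H)] [BorelSpace (G ⧸ H)] :
    (∃ μ : Measure (G ⧸ H), μ ≠ 0 ∧ SigmaFinite μ ∧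
      ∀ g : G, μ.map (fun x : G ⧸ H => g • x) ≪ μ ∧ μ ≪ μ.map (fun x : G ⧸ H => g • x)) ∧
    (∀ μ ν : Measure (G ⧸ H), μ ≠ 0 → ν ≠ 0 → SigmaFinite μ → SigmaFinite ν →
      (∀ g : G, μ.map (fun x : G ⧸ H => g • x) ≪ μ ∧ μ ≪ μ.map (fun x : G ⧸ H => g • x)) →
      (∀ g : G, ν.map (fun x : G ⧸ H => g • x) ≪ ν ∧ ν ≪ ν.map (fun x : G ⧸ H => g • x)) →
      μ ≪ ν ∧ ν ≪ μ) := by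
  letI : MeasurableSpace G := borel G
  haveI : BorelSpace G := ⟨rfl⟩
  -- Haar measure on `G` and a finite measure equivalent to it
  set μG : Measure G := MeasureTheory.Measure.haar with hμGdef
  haveI : SigmaFinite μG := by infer_instance
  set ρ : Measure G := μG.toFinite with hρdef
  have hρ1 : ρ ≪ μG := toFinite_absolutelyContinuous μG
  have hρ2 : μG ≪ ρ := absolutelyContinuous_toFinite μG
  have hμG0 : μG ≠ 0 := NeZero.ne μG
  have hρ0 : ρ ≠ 0 := by
    intro h
    apply hμG0
    exact Measure.absolutelyContinuous_zero_iff.mp (h ▸ hρ2)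
  -- the quotient map
  set q : G → G ⧸ H := QuotientGroup.mk with hqdef
  have hq : Measurable q := by apply Continuous.measurable; exact continuous_quot_mk
  have hqsurj : Function.Surjective q := Quotient.exists_rep
  -- measurability of the action
  have hact : Measurable (fun p : G × (G ⧸ H) => p.1 • p.2) :=
    (continuous_smul : Continuous fun p : G × (G ⧸ H) => p.1 • p.2).measurable
  have hsmulg : ∀ g : G, Measurable (fun x : G ⧸ H => g • x) := fun g =>
    (continuous_const_smul g).measurable
  have hmulg : ∀ g : G, Measurable (fun x : G => g * x) := fun g =>
    (continuous_const.mul continuous_id).measurable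
  -- smul on the quotient commutes with the quotient map
  have hcomm : ∀ g : G, (fun x : G ⧸ H => g • x) ∘ q = q ∘ (fun x => g * x) := by
    intro g; funext x; rfl
  -- Key lemma: a nonzero σ-finite quasi-invariant measure has the same null sets as
  -- the pushforward of `ρ` (on measurable sets).
  have key : ∀ μ : Measure (G ⧸ H), μ ≠ 0 → SigmaFinite μ →
      (∀ g : G, μ.map (fun x : G ⧸ H => g • x) ≪ μ ∧ μ ≪ μ.map (fun x : G ⧸ H => g • x)) →
      ∀ E : Set (G ⧸ H), MeasurableSet E → (μ E = 0 ↔ ρ (q ⁻¹' E) = 0) := by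
    intro μ hμ0 hμsf hqi E hE
    haveI := hμsf
    set A : Set (G × (G ⧸ H)) := (fun p : G × (G ⧸ H) => p.1 • p.2) ⁻¹' E with hAdef
    have hA : MeasurableSet A := hact hE
    set f : G → G ⧸ H → ℝ≥0∞ := fun g x => A.indicator 1 (g, x) with hfdef
    have hunc : Measurable (Function.uncurry f) := by
      have : Function.uncurry f = A.indicator 1 := by
        funext p; cases p; rfl
      rw [this]
      exact measurable_one.indicator hA
    have hfmeas : AEMeasurable (Function.uncurry f) (ρ.prod μ) := hunc.aemeasurable
    -- inner integral in x
    have hinner : ∀ g : G, ∫⁻ x, f g x ∂μ = (μ.map (fun x : G ⧸ H => g • x)) E := by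
      intro g
      rw [Measure.map_apply (hsmulg g) hE]
      have : ∀ x, f g x = ((fun x : G ⧸ H => g • x) ⁻¹' E).indicator 1 x := by
        intro x; rfl
      simp_rw [this]
      rw [lintegral_indicator ((hsmulg g) hE)]
      simp
    -- inner integral in g
    have hinner' : ∀ a : G, ∫⁻ g, f g (q a) ∂ρ = ρ ((fun g => g * a) ⁻¹' (q ⁻¹' E)) := by
      intro a
      have : ∀ g, f g (q a) = ((fun g : G => g * a) ⁻¹' (q ⁻¹' E)).indicator 1 g := by
        intro g; rfl
      simp_rw [this]
      rw [lintegral_indicator ((measurable_mul_const a) (hq hE))]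
      simp
    constructor
    · -- μ E = 0 → ρ (q⁻¹ E) = 0
      intro hμE
      have h1 : ∫⁻ g, ∫⁻ x, f g x ∂μ ∂ρ = 0 := by
        have : ∀ g : G, ∫⁻ x, f g x ∂μ = 0 := by
          intro g
          rw [hinner g]
          exact (hqi g).1 hμE
        simp [this]
      rw [lintegral_lintegral_swap hfmeas] at h1
      have h2 : (fun x => ∫⁻ g, f g x ∂ρ) =ᵐ[μ] 0 :=
        (lintegral_eq_zero_iff (Measurable.lintegral_prod_left hunc)).mp h1
      haveI : (ae μ).NeBot := ae_neBot.mpr hμ0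
      obtain ⟨x, hx⟩ := h2.exists
      obtain ⟨a, rfl⟩ := hqsurj x
      have hx' : ρ ((fun g => g * a) ⁻¹' (q ⁻¹' E)) = 0 := by
        rw [← hinner' a]; simpa using hx
      clear hx
      have hx := hx'
      have hμGnull : μG ((fun g => g * a) ⁻¹' (q ⁻¹' E)) = 0 := hρ2 hx
      rw [measure_mul_right_null] at hμGnull
      exact hρ1 hμGnull
    · -- ρ (q⁻¹ E) = 0 → μ E = 0
      intro hρE
      have hμGnull : μG (q ⁻¹' E) = 0 := hρ2 hρE
      have h1 : ∫⁻ x, ∫⁻ g, f g x ∂ρ ∂μ = 0 := by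
        have : ∀ x : G ⧸ H, ∫⁻ g, f g x ∂ρ = 0 := by
          intro x
          obtain ⟨a, rfl⟩ := hqsurj x
          rw [hinner' a]
          exact hρ1 ((measure_mul_right_null μG a).mpr hμGnull)
        simp [this]
      rw [← lintegral_lintegral_swap hfmeas] at h1
      have h2 : (fun g => ∫⁻ x, f g x ∂μ) =ᵐ[ρ] 0 :=
        (lintegral_eq_zero_iff (Measurable.lintegral_prod_right hunc)).mp h1
      haveI : (ae ρ).NeBot := ae_neBot.mpr hρ0
      obtain ⟨g, hg⟩ := h2.exists
      have hg' : (μ.map (fun x : G ⧸ H => g • x)) E = 0 := by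
        rw [← hinner g]; simpa using hg
      exact (hqi g).2 hg'
  constructor
  · -- existence
    refine ⟨ρ.map q, ?_, ?_, ?_⟩
    · intro h
      apply hρ0
      have h1 : (ρ.map q) Set.univ = 0 := by rw [h]; simp
      rw [Measure.map_apply hq MeasurableSet.univ, Set.preimage_univ] at h1
      exact Measure.measure_univ_eq_zero.mp h1
    · haveI : IsFiniteMeasure ρ := inferInstance
      infer_instance
    · intro g
      have hmap : (ρ.map q).map (fun x : G ⧸ H => g • x) = (ρ.map (fun x => g * x)).map q := by
        rw [Measure.map_map (hsmulg g) hq, Measure.map_map hq (hmulg g), hcomm g]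
      have hHaarInv : μG.map (fun x => g * x) = μG :=
        MeasureTheory.map_mul_left_eq_self μG g
      have h1 : ρ.map (fun x => g * x) ≪ ρ := by
        have h := hρ1.map (hmulg g)
        rw [hHaarInv] at h
        exact h.trans hρ2
      have h2 : ρ ≪ ρ.map (fun x => g * x) := by
        have h := hρ2.map (hmulg g)
        rw [hHaarInv] at h
        exact hρ1.trans h
      constructor
      · rw [hmap]; exact h1.map hq
      · rw [hmap]; exact h2.map hq
  · -- uniqueness of the measure class
    intro μ ν hμ0 hν0 hμsf hνsf hμqi hνqi
    constructor
    · exact Measure.AbsolutelyContinuous.mk fun E hE hνE =>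
        (key μ hμ0 hμsf hμqi E hE).mpr ((key ν hν0 hνsf hνqi E hE).mp hνE)
    · exact Measure.AbsolutelyContinuous.mk fun E hE hμE =>
        (key ν hν0 hνsf hνqi E hE).mpr ((key μ hμ0 hμsf hμqi E hE).mp hμE)
end
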